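/- Applying the semi-relativistic boost Λ_sr(u) to the electromagnetic field tensor F = [[0, -Eᵀ/c], [E/c, W(B)]] via F' = Λ_sr F Λ_srᵀ yields, exactly, a tensor of the same form with electric field E + u×B - (u·E/c²)u and magnetic field B - u×E/c² plus a symmetric correction; in particular, the (0,i) block of F' equals (E + u×B)/c - (u·E)u/c³. -/

import Mathlib

open Matrix

/-- The semi-relativistic boost `Λ_sr(u) = [[1, -uᵀ/c], [-u/c, I]]`. -/
noncomputable def boostSR (c : ℝ) (u : Fin 3 → ℝ) :
    Matrix (Fin 1 ⊕ Fin 3) (Fin 1 ⊕ Fin 3) ℝ :=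
  Matrix.fromBlocks 1 (Matrix.of fun _ j => -(u j / c)) (Matrix.of fun i _ => -(u i / c)) 1

/-- The cross-product matrix with skew axis `a`. -/
def wmat (a : Fin 3 → ℝ) : Matrix (Fin 3) (Fin 3) ℝ :=
  !![0, -a 2, a 1; a 2, 0, -a 0; -a 1, a 0, 0]

/-- The electromagnetic field tensor `F = [[0, -Eᵀ/c], [E/c, W(B)]]`. -/
noncomputable def emTensor (c : ℝ) (E B : Fin 3 → ℝ) :
    Matrix (Fin 1 ⊕ Fin 3) (Fin 1 ⊕ Fin 3) ℝ :=
  Matrix.fromBlocks 0 (Matrix.of fun _ j => -(E j / c)) (Matrix.of fun i _ => E i / c) (wmat B)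

/-- Exact computation of the electric block of the boosted field tensor
`F' = Λ_sr F Λ_srᵀ`: the transformed electric field is
`E + u×B - (u·E/c²)u`, i.e. the electric block of `F'` equals
`(E + u×B)/c - (u·E)u/c³`. -/
theorem boosted_emTensor_electric_block (c : ℝ) (hc : 0 < c) (u E B : Fin 3 → ℝ) :
    ∀ i : Fin 3,
      (boostSR c u * emTensor c E B * (boostSR c u)ᵀ) (Sum.inr i) (Sum.inl 0)
        = (E + u ⨯₃ B) i / c - (u ⬝ᵥ E) * u i / c ^ 3 := by
  have hc' : c ≠ 0 := hc.ne'
  intro i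
  fin_cases i <;>
    simp [boostSR, emTensor, wmat, Matrix.mul_apply, Fin.sum_univ_succ,
      Matrix.fromBlocks, crossProduct, dotProduct, Matrix.transpose_apply,
      Matrix.one_apply] <;>
    field_simp <;> ring
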